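/- Define S(α) = Σ_{X/2 < p ≤ X} (log p)·e(α·p·log p) and let τ = X^(−23/25). Then ∫_{−τ}^{τ} |S(α)|² dα ≪ X·(log X)² for X sufficiently large. -/

import Mathlib

open Finset

noncomputable def Ssum (X α : ℝ) : ℂ :=
  ∑ p ∈ (Finset.Ioc ⌊X / 2⌋₊ ⌊X⌋₊).filter Nat.Prime,
    (Real.log p : ℂ) * Complex.exp (2 * Real.pi * Complex.I * (α * p * Real.log p))

noncomputable def K (c α : ℝ) : ℂ := Complex.exp (2*Real.pi*Complex.I*((α:ℂ)*(c:ℂ)))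

lemma K_cont (c : ℝ) : Continuous (K c) := by
  unfold K; fun_prop

lemma norm_int_K_le_inv (τ c : ℝ) (hc : c ≠ 0) :
    ‖∫ α in (-τ)..τ, K c α‖ ≤ 1/(Real.pi * |c|) := by
  have hcc : (2*Real.pi*Complex.I*(c:ℂ)) ≠ 0 := by
    simp [Real.pi_ne_zero, Complex.I_ne_zero, Complex.ofReal_ne_zero, hc]
  have h1 : ∀ α:ℝ, K c α = Complex.exp ((2*Real.pi*Complex.I*(c:ℂ)) * (α:ℂ)) := by
    intro α; unfold K; ring_nf
  simp_rw [h1]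
  rw [integral_exp_mul_complex hcc]
  have hre : ∀ t : ℝ, ((2*Real.pi*Complex.I*(c:ℂ)) * (t:ℂ)).re = 0 := by
    intro t; simp
  have hnorm : ∀ t : ℝ, ‖Complex.exp ((2*Real.pi*Complex.I*(c:ℂ)) * (t:ℂ))‖ = 1 := by
    intro t; rw [Complex.norm_exp, hre, Real.exp_zero]
  have hden : ‖(2*Real.pi*Complex.I*(c:ℂ))‖ = 2*Real.pi*|c| := by
    simp [abs_of_pos Real.pi_pos]
  rw [norm_div, hden]
  have h2 : ‖Complex.exp ((2*Real.pi*Complex.I*(c:ℂ)) * ((τ:ℝ):ℂ)) - Complex.exp ((2*Real.pi*Complex.I*(c:ℂ)) * (((-τ:ℝ)):ℂ))‖ ≤ 2 := by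
    calc _ ≤ _ + _ := norm_sub_le _ _
    _ ≤ 2 := by rw [hnorm, hnorm]; norm_num
  have hpos : 0 < 2*Real.pi*|c| := by positivity
  rw [div_le_div_iff₀ hpos (by positivity)]
  calc _ * (Real.pi * |c|) ≤ 2 * (Real.pi * |c|) := by
        apply mul_le_mul_of_nonneg_right h2 (by positivity)
  _ = 1 * (2*Real.pi*|c|) := by ring

lemma norm_int_K_le (τ c : ℝ) (hτ : 0 ≤ τ) :
    ‖∫ α in (-τ)..τ, K c α‖ ≤ 2*τ := by
  have := intervalIntegral.norm_integral_le_of_norm_le_const (a := -τ) (b := τ) (C := 1)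
    (f := K c) (by
      intro x hx
      unfold K
      rw [Complex.norm_exp]
      simp)
  have h2 : |τ - (-τ)| = 2*τ := by rw [abs_of_nonneg (by linarith)]; ring
  calc ‖∫ α in (-τ)..τ, K c α‖ ≤ 1 * |τ - (-τ)| := this
  _ = 2*τ := by rw [h2]; ring

lemma K_mul (c d α : ℝ) : K c α * K d α = K (c+d) α := by
  unfold K; rw [← Complex.exp_add]; congr 1; push_cast; ring

lemma K_conj (c α : ℝ) : (starRingEnd ℂ) (K c α) = K (-c) α := by
  unfold K
  rw [← Complex.exp_conj]
  congr 1
  simp [Complex.ext_iff]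

lemma Ssum_eq (X α : ℝ) : Ssum X α
    = ∑ p ∈ (Finset.Ioc ⌊X / 2⌋₊ ⌊X⌋₊).filter Nat.Prime,
      ((Real.log p : ℝ):ℂ) * K ((p:ℝ) * Real.log p) α := by
  unfold Ssum K
  refine Finset.sum_congr rfl fun p _ => ?_
  congr 2
  push_cast
  ring

lemma expand_sq (T : Finset ℕ) (f : ℕ → ℝ) (α : ℝ) :
    (‖∑ p ∈ T, ((Real.log p : ℝ):ℂ) * K (f p) α‖)^2
    = (∑ p ∈ T, ∑ q ∈ T, ((Real.log p * Real.log q : ℝ):ℂ) * K (f p - f q) α).re := by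
  set z := ∑ p ∈ T, ((Real.log p : ℝ):ℂ) * K (f p) α with hz
  have h1 : (‖z‖)^2 = (z * (starRingEnd ℂ) z).re := by
    rw [Complex.mul_conj]
    simp [Complex.sq_norm]
  rw [h1]
  congr 1
  rw [hz, map_sum, Finset.sum_mul_sum]
  refine Finset.sum_congr rfl fun p _ => Finset.sum_congr rfl fun q _ => ?_
  rw [map_mul, Complex.conj_ofReal, K_conj]
  push_cast
  rw [mul_mul_mul_comm, K_mul]
  ring_nf

lemma icc_harm (b : ℕ) : ∑ k ∈ Finset.Icc 1 b, ((k:ℝ))⁻¹ ≤ 1 + Real.log b := by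
  have h1 : ∑ k ∈ Finset.Icc 1 b, ((k:ℝ))⁻¹ = (harmonic b : ℝ) := by
    rw [harmonic]
    push_cast
    rw [show Finset.Icc 1 b = Finset.Ico 1 (b+1) by rw [Finset.Ico_add_one_right_eq_Icc]]
    rw [Finset.sum_Ico_eq_sum_range]
    simp [add_comm]
  rw [h1]
  exact_mod_cast harmonic_le_one_add_log b

lemma sum_inv_abs_le (a b p : ℕ) (hp : p ∈ Finset.Ioc a b) (s : Finset ℕ)
    (hs : s ⊆ Finset.Ioc a b) :
    ∑ q ∈ s.erase p, (|(p:ℝ) - q|)⁻¹ ≤ 2 * (1 + Real.log b) := by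
  have hnn : ∀ q : ℕ, (0:ℝ) ≤ (|(p:ℝ) - q|)⁻¹ := fun q => by positivity
  have step0 : ∑ q ∈ s.erase p, (|(p:ℝ) - q|)⁻¹
      ≤ ∑ q ∈ (Finset.Ioc a b).erase p, (|(p:ℝ) - q|)⁻¹ :=
    Finset.sum_le_sum_of_subset_of_nonneg (Finset.erase_subset_erase _ hs)
      (fun q _ _ => hnn q)
  refine step0.trans ?_
  rw [← Finset.sum_filter_add_sum_filter_not ((Finset.Ioc a b).erase p) (· < p)]
  have hpb := (Finset.mem_Ioc.mp hp).2
  have key1 : ∑ q ∈ ((Finset.Ioc a b).erase p).filter (· < p), (|(p:ℝ) - q|)⁻¹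
      ≤ ∑ k ∈ Finset.Icc 1 b, ((k:ℝ))⁻¹ := by
    have heq : ∀ q ∈ ((Finset.Ioc a b).erase p).filter (· < p),
        (|(p:ℝ) - q|)⁻¹ = (((p - q : ℕ):ℝ))⁻¹ := by
      intro q hq
      have hqp : q < p := (Finset.mem_filter.mp hq).2
      rw [Nat.cast_sub hqp.le, abs_of_pos]
      have : (q:ℝ) < p := by exact_mod_cast hqp
      linarith
    rw [Finset.sum_congr rfl heq]
    have hinj : ∀ x ∈ ((Finset.Ioc a b).erase p).filter (· < p),
        ∀ y ∈ ((Finset.Ioc a b).erase p).filter (· < p), p - x = p - y → x = y := by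
      intro x hx y hy hxy
      have hx' : x < p := (Finset.mem_filter.mp hx).2
      have hy' : y < p := (Finset.mem_filter.mp hy).2
      omega
    have himg := Finset.sum_image (s := ((Finset.Ioc a b).erase p).filter (· < p))
      (f := fun k : ℕ => ((k:ℝ))⁻¹) (g := fun q => p - q) hinj
    rw [← himg]
    apply Finset.sum_le_sum_of_subset_of_nonneg
    · intro k hk
      simp only [Finset.mem_image] at hk
      obtain ⟨q, hq, rfl⟩ := hk
      have hq' : q < p := (Finset.mem_filter.mp hq).2
      simp only [Finset.mem_Icc]
      omega
    · intro k _ _; positivity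
  have key2 : ∑ q ∈ ((Finset.Ioc a b).erase p).filter (fun q => ¬ q < p), (|(p:ℝ) - q|)⁻¹
      ≤ ∑ k ∈ Finset.Icc 1 b, ((k:ℝ))⁻¹ := by
    have heq : ∀ q ∈ ((Finset.Ioc a b).erase p).filter (fun q => ¬ q < p),
        (|(p:ℝ) - q|)⁻¹ = (((q - p : ℕ):ℝ))⁻¹ := by
      intro q hq
      have h1 := Finset.mem_filter.mp hq
      have hne : q ≠ p := Finset.ne_of_mem_erase h1.1
      have hqp : p < q := by omega
      rw [Nat.cast_sub hqp.le, abs_sub_comm, abs_of_pos]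
      have : (p:ℝ) < q := by exact_mod_cast hqp
      linarith
    rw [Finset.sum_congr rfl heq]
    have hinj : ∀ x ∈ ((Finset.Ioc a b).erase p).filter (fun q => ¬ q < p),
        ∀ y ∈ ((Finset.Ioc a b).erase p).filter (fun q => ¬ q < p), x - p = y - p → x = y := by
      intro x hx y hy hxy
      have hx' : ¬ x < p := (Finset.mem_filter.mp hx).2
      have hy' : ¬ y < p := (Finset.mem_filter.mp hy).2
      omega
    have himg := Finset.sum_image (s := ((Finset.Ioc a b).erase p).filter (fun q => ¬ q < p))
      (f := fun k : ℕ => ((k:ℝ))⁻¹) (g := fun q => q - p) hinj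
    rw [← himg]
    apply Finset.sum_le_sum_of_subset_of_nonneg
    · intro k hk
      simp only [Finset.mem_image] at hk
      obtain ⟨q, hq, rfl⟩ := hk
      have h1 := Finset.mem_filter.mp hq
      have hne : q ≠ p := Finset.ne_of_mem_erase h1.1
      have hqb : q ≤ b := (Finset.mem_Ioc.mp (Finset.mem_of_mem_erase h1.1)).2
      simp only [Finset.mem_Icc]
      omega
    · intro k _ _; positivity
  have := icc_harm b
  linarith

lemma interval_re (a b : ℝ) (hab : a ≤ b) (g : ℝ → ℂ) (hg : Continuous g) :
    ∫ α in a..b, (g α).re = (∫ α in a..b, g α).re := by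
  rw [intervalIntegral.integral_of_le hab, intervalIntegral.integral_of_le hab]
  exact integral_re (hg.integrableOn_Ioc)

set_option maxHeartbeats 2000000 in
theorem stmt7 :
    ∃ C : ℝ, 0 < C ∧ ∃ X₀ : ℝ, ∀ X : ℝ, X ≥ X₀ →
      ∫ α in (-(X ^ (-(23 : ℝ) / 25)))..(X ^ (-(23 : ℝ) / 25)),
          ‖Ssum X α‖ ^ 2
        ≤ C * X * Real.log X ^ 2 := by
  refine ⟨5, by norm_num, 16, fun X hX => ?_⟩
  have hX0 : (0:ℝ) < X := by linarith
  set τ : ℝ := X ^ (-(23 : ℝ) / 25) with hτdef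
  set a : ℕ := ⌊X / 2⌋₊ with hadef
  set b : ℕ := ⌊X⌋₊ with hbdef
  set T : Finset ℕ := (Finset.Ioc a b).filter Nat.Prime with hTdef
  set L : ℝ := Real.log X with hLdef
  set F : ℕ → ℝ := fun n => (n:ℝ) * Real.log n with hFdef
  set L2 : ℝ := Real.log (X/2) with hL2def
  have hτpos : 0 < τ := Real.rpow_pos_of_pos hX0 _
  have hτ1 : τ ≤ 1 := Real.rpow_le_one_of_one_le_of_nonpos (by linarith) (by norm_num)
  have hL1 : 1 ≤ L := by
    rw [hLdef, Real.le_log_iff_exp_le (by linarith)]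
    have := Real.exp_one_lt_d9
    linarith
  have hL2 : L/2 ≤ L2 := by
    have h4 : Real.log 4 ≤ L := Real.log_le_log (by norm_num) (by linarith)
    have hlog2 : L2 = L - Real.log 2 := by
      rw [hL2def, hLdef, Real.log_div (by linarith) (by norm_num)]
    have h42 : Real.log 4 = 2 * Real.log 2 := by
      rw [show (4:ℝ) = 2^2 by norm_num, Real.log_pow]; push_cast; ring
    rw [hlog2]; rw [h42] at h4; linarith
  have hL2pos : 0 < L2 := by linarith
  have hbX : (b:ℝ) ≤ X := Nat.floor_le hX0.le
  have hTsub : T ⊆ Finset.Ioc a b := Finset.filter_subset _ _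
  have hmem : ∀ p ∈ T, X/2 < (p:ℝ) ∧ (p:ℝ) ≤ X := by
    intro p hp
    have h1 := Finset.mem_Ioc.mp (hTsub hp)
    constructor
    · have ha1 : X/2 < (a:ℝ) + 1 := Nat.lt_floor_add_one _
      have ha2 : (a:ℝ) + 1 ≤ (p:ℝ) := by exact_mod_cast h1.1
      linarith
    · calc (p:ℝ) ≤ (b:ℝ) := by exact_mod_cast h1.2
      _ ≤ X := hbX
  have hw : ∀ p ∈ T, 0 ≤ Real.log p ∧ Real.log p ≤ L := by
    intro p hp
    obtain ⟨h1, h2⟩ := hmem p hp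
    exact ⟨Real.log_nonneg (by linarith), Real.log_le_log (by linarith) h2⟩
  have hmono : ∀ x y : ℝ, X/2 < y → y ≤ x →
      (x - y) * L2 ≤ x * Real.log x - y * Real.log y := by
    intro x y h1 h2
    have hly : L2 ≤ Real.log y := Real.log_le_log (by linarith) h1.le
    have hlx : Real.log y ≤ Real.log x := Real.log_le_log (by linarith) h2
    have hy0 : 0 ≤ y := by linarith
    nlinarith [mul_le_mul_of_nonneg_left (hly.trans hlx) (sub_nonneg.2 h2),
      mul_nonneg hy0 (sub_nonneg.2 hlx)]
  have hΔ : ∀ p ∈ T, ∀ q ∈ T, p ≠ q → |(p:ℝ) - q| * L2 ≤ |F p - F q| := by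
    intro p hp q hq hne
    obtain ⟨hp1, hp2⟩ := hmem p hp
    obtain ⟨hq1, hq2⟩ := hmem q hq
    rcases lt_or_gt_of_ne hne with h | h
    · have hcast : (p:ℝ) < q := by exact_mod_cast h
      have hm := hmono (q:ℝ) (p:ℝ) hp1 hcast.le
      have h1 : |(p:ℝ) - q| = (q:ℝ) - p := by
        rw [abs_sub_comm]; exact abs_of_nonneg (by linarith)
      have hFle : F p ≤ F q := by
        simp only [hFdef]
        nlinarith [mul_nonneg (sub_nonneg.2 hcast.le) hL2pos.le]
      have h2 : |F p - F q| = F q - F p := by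
        rw [abs_sub_comm]; exact abs_of_nonneg (by linarith)
      rw [h1, h2]; exact hm
    · have hcast : (q:ℝ) < p := by exact_mod_cast h
      have hm := hmono (p:ℝ) (q:ℝ) hq1 hcast.le
      have h1 : |(p:ℝ) - q| = (p:ℝ) - q := abs_of_nonneg (by linarith)
      have hFle : F q ≤ F p := by
        simp only [hFdef]
        nlinarith [mul_nonneg (sub_nonneg.2 hcast.le) hL2pos.le]
      have h2 : |F p - F q| = F p - F q := abs_of_nonneg (by linarith)
      rw [h1, h2]; exact hm
  have key : (∫ α in (-τ)..τ, ‖Ssum X α‖ ^ 2)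
      = (∑ p ∈ T, ∑ q ∈ T, ((Real.log p * Real.log q : ℝ):ℂ)
          * ∫ α in (-τ)..τ, K (F p - F q) α).re := by
    have h1 : ∀ α : ℝ, ‖Ssum X α‖ ^ 2
        = ((fun α => ∑ p ∈ T, ∑ q ∈ T, ((Real.log p * Real.log q : ℝ):ℂ)
            * K (F p - F q) α) α).re := by
      intro α
      rw [Ssum_eq]
      exact expand_sq T F α
    rw [intervalIntegral.integral_congr (fun α _ => h1 α)]
    rw [interval_re _ _ (by linarith) _ (by
      apply continuous_finset_sum
      intro p _
      apply continuous_finset_sum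
      intro q _
      exact continuous_const.mul (K_cont _))]
    congr 1
    rw [intervalIntegral.integral_finset_sum
      (f := fun (p : ℕ) (α : ℝ) => ∑ q ∈ T, ((Real.log p * Real.log q : ℝ):ℂ) * K (F p - F q) α) (fun p _ =>
      ((continuous_finset_sum _ fun q _ =>
        continuous_const.mul (K_cont _)).intervalIntegrable _ _))]
    refine Finset.sum_congr rfl fun p _ => ?_
    rw [intervalIntegral.integral_finset_sum
      (f := fun (q : ℕ) (α : ℝ) => ((Real.log p * Real.log q : ℝ):ℂ) * K (F p - F q) α) (fun q _ =>
      ((continuous_const.mul (K_cont _)).intervalIntegrable _ _))]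
    exact Finset.sum_congr rfl fun q _ => intervalIntegral.integral_const_mul _ _
  rw [key]
  have hstep1 : (∑ p ∈ T, ∑ q ∈ T, ((Real.log p * Real.log q : ℝ):ℂ)
          * ∫ α in (-τ)..τ, K (F p - F q) α).re
      ≤ ∑ p ∈ T, ∑ q ∈ T, (Real.log p * Real.log q)
          * ‖∫ α in (-τ)..τ, K (F p - F q) α‖ := by
    refine le_trans (Complex.re_le_norm _) ?_
    refine le_trans (norm_sum_le _ _) (Finset.sum_le_sum fun p hp => ?_)
    refine le_trans (norm_sum_le _ _) (Finset.sum_le_sum fun q hq => ?_)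
    rw [norm_mul, Complex.norm_real, Real.norm_eq_abs,
      abs_of_nonneg (mul_nonneg (hw p hp).1 (hw q hq).1)]
  have hπ3 : (3:ℝ) < Real.pi := Real.pi_gt_three
  have hperp : ∀ p ∈ T, ∑ q ∈ T, (Real.log p * Real.log q)
        * ‖∫ α in (-τ)..τ, K (F p - F q) α‖ ≤ 5 * L^2 := by
    intro p hp
    rw [← Finset.add_sum_erase T _ hp]
    have hdiag : (Real.log p * Real.log p) * ‖∫ α in (-τ)..τ, K (F p - F p) α‖
        ≤ 2 * L^2 := by
      have h1 := norm_int_K_le τ (F p - F p) hτpos.le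
      have h2 : Real.log p * Real.log p ≤ L * L :=
        mul_le_mul (hw p hp).2 (hw p hp).2 (hw p hp).1 (by linarith)
      calc (Real.log p * Real.log p) * ‖∫ α in (-τ)..τ, K (F p - F p) α‖
          ≤ (L * L) * (2*τ) := by
            apply mul_le_mul h2 h1 (norm_nonneg _)
            nlinarith
      _ ≤ 2 * L^2 := by nlinarith
    have hoff : ∑ q ∈ T.erase p, (Real.log p * Real.log q)
          * ‖∫ α in (-τ)..τ, K (F p - F q) α‖
        ≤ (L^2/(Real.pi * L2)) * (2 * (1 + L)) := by
      have hterm : ∀ q ∈ T.erase p, (Real.log p * Real.log q)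
            * ‖∫ α in (-τ)..τ, K (F p - F q) α‖
          ≤ (L^2/(Real.pi * L2)) * (|(p:ℝ) - q|)⁻¹ := by
        intro q hq
        have hqT : q ∈ T := Finset.mem_of_mem_erase hq
        have hne : p ≠ q := (Finset.ne_of_mem_erase hq).symm
        have hdpos : 0 < |(p:ℝ) - q| := by
          rw [abs_pos, sub_ne_zero]
          exact_mod_cast fun h => hne (Nat.cast_injective h)
        have hΔpq := hΔ p hp q hqT hne
        have hΔpos : 0 < |F p - F q| := lt_of_lt_of_le (by positivity) hΔpq
        have hΔne : F p - F q ≠ 0 := by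
          intro h; rw [h, abs_zero] at hΔpos; exact lt_irrefl _ hΔpos
        have hI := norm_int_K_le_inv τ _ hΔne
        have hI2 : ‖∫ α in (-τ)..τ, K (F p - F q) α‖
            ≤ 1/(Real.pi * (|(p:ℝ) - q| * L2)) := by
          refine hI.trans ?_
          apply div_le_div_of_nonneg_left (by norm_num) (by positivity)
          apply mul_le_mul_of_nonneg_left hΔpq (by positivity)
        have h2 : Real.log p * Real.log q ≤ L^2 := by
          have := hw p hp; have := hw q hqT
          nlinarith
        calc (Real.log p * Real.log q) * ‖∫ α in (-τ)..τ, K (F p - F q) α‖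
            ≤ L^2 * (1/(Real.pi * (|(p:ℝ) - q| * L2))) := by
              apply mul_le_mul h2 hI2 (norm_nonneg _)
              positivity
        _ = (L^2/(Real.pi * L2)) * (|(p:ℝ) - q|)⁻¹ := by
              field_simp
      refine le_trans (Finset.sum_le_sum hterm) ?_
      rw [← Finset.mul_sum]
      have hsum := sum_inv_abs_le a b p (hTsub hp) T hTsub
      have hlogb : Real.log b ≤ L := by
        apply Real.log_le_log _ hbX
        have h1 := Finset.mem_Ioc.mp (hTsub hp)
        have : (0:ℕ) < b := lt_of_le_of_lt (Nat.zero_le _) (lt_of_le_of_lt (Nat.zero_le a) (lt_of_lt_of_le h1.1 h1.2))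
        exact_mod_cast this
      have : ∑ q ∈ T.erase p, (|(p:ℝ) - q|)⁻¹ ≤ 2 * (1 + L) := by
        refine hsum.trans ?_
        nlinarith
      apply mul_le_mul_of_nonneg_left this (by positivity)
    have hfrac : (L^2/(Real.pi * L2)) * (2 * (1 + L)) ≤ 3 * L^2 := by
      have hD : L^2/(Real.pi * L2) ≤ (2/3) * L := by
        rw [div_le_iff₀ (by positivity)]
        have hA : 3*(L/2) ≤ Real.pi * L2 := by nlinarith
        nlinarith [mul_le_mul_of_nonneg_left hA (by positivity : (0:ℝ) ≤ (2/3)*L)]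
      calc (L^2/(Real.pi * L2)) * (2 * (1 + L)) ≤ ((2/3)*L) * (2 * (1 + L)) := by
            apply mul_le_mul_of_nonneg_right hD (by positivity)
      _ ≤ 3 * L^2 := by nlinarith
    linarith
  calc (∑ p ∈ T, ∑ q ∈ T, ((Real.log p * Real.log q : ℝ):ℂ)
          * ∫ α in (-τ)..τ, K (F p - F q) α).re
      ≤ ∑ p ∈ T, ∑ q ∈ T, (Real.log p * Real.log q)
          * ‖∫ α in (-τ)..τ, K (F p - F q) α‖ := hstep1
  _ ≤ ∑ p ∈ T, 5 * L^2 := Finset.sum_le_sum hperp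
  _ = (T.card : ℝ) * (5 * L^2) := by rw [Finset.sum_const, nsmul_eq_mul]
  _ ≤ X * (5 * L^2) := by
      apply mul_le_mul_of_nonneg_right _ (by positivity)
      calc (T.card : ℝ) ≤ ((Finset.Ioc a b).card : ℝ) := by
            exact_mod_cast Finset.card_le_card hTsub
      _ = ((b - a : ℕ) : ℝ) := by rw [Nat.card_Ioc]
      _ ≤ (b : ℝ) := by
            have : b - a ≤ b := Nat.sub_le _ _
            exact_mod_cast this
      _ ≤ X := hbX
  _ = 5 * X * Real.log X ^ 2 := by rw [hLdef]; ring
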